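/- Let 𝔽_q be the finite field with q elements. Then the pointwise stabilizer St_α(𝔽_q) of 𝔽_q in the group of polynomial permutations of 𝔽_q[α] has exactly (q−1)^q elements. -/
import Mathlib


open Polynomial

namespace CardStabAux

open TrivSqZeroExt

variable {F : Type*} [Field F] [Fintype F]

/-- The first-coordinate projection as a ring hom. -/
noncomputable def π (F : Type*) [Field F] : DualNumber F →+* F :=
  (TrivSqZeroExt.fstHom F F F).toRingHom

@[simp] lemma π_apply {F : Type*} [Field F] (x : DualNumber F) : π F x = x.fst := rfl

lemma fst_eval (f : Polynomial (DualNumber F)) (x : DualNumber F) :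
    (f.eval x).fst = (f.map (π F)).eval x.fst := by
  rw [eval_map]
  simpa using (eval₂_at_apply (p := f) (π F) x).symm

lemma snd_eval (f : Polynomial (DualNumber F)) (a b : F) :
    (f.eval (.inl a + .inr b)).snd
      = b * ((f.map (π F)).derivative.eval a) + (f.eval (.inl a)).snd := by
  induction f using Polynomial.induction_on' with
  | add p q hp hq =>
      simp only [eval_add, snd_add, Polynomial.map_add, derivative_add, hp, hq]
      ring
  | monomial n r =>
      simp only [eval_monomial, Polynomial.map_monomial, derivative_monomial, π_apply,
        DualNumber.snd_mul, snd_pow, fst_pow, fst_add, fst_inl, fst_inr, snd_add, snd_inl,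
        snd_inr, inl_pow, smul_eq_mul, nsmul_eq_mul, Nat.pred_eq_sub_one, add_zero, zero_add,
        mul_zero]
      ring

/-- The key structural formula for a polynomial map fixing `F` pointwise. -/
lemma key {G : DualNumber F → DualNumber F} (f : Polynomial (DualNumber F))
    (hf : ∀ x, G x = f.eval x) (hfix : ∀ r : F, G (.inl r) = .inl r) (a b : F) :
    G (.inl a + .inr b) = .inl a + .inr (b * ((f.map (π F)).derivative.eval a)) := by
  have hfst : (f.eval (TrivSqZeroExt.inl a)).fst = a := by
    rw [← hf, hfix]; simp
  have hsnd : (f.eval (TrivSqZeroExt.inl a)).snd = 0 := by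
    rw [← hf, hfix]; simp
  have h1 : (f.map (π F)).eval a = a := by
    have := fst_eval f (TrivSqZeroExt.inl a)
    simpa [hfst] using this.symm
  rw [hf]
  refine TrivSqZeroExt.ext ?_ ?_
  · rw [fst_eval]
    simp [h1]
  · rw [snd_eval]
    simp [hsnd]

lemma key2 {G : DualNumber F → DualNumber F}
    (hG : (∃ f : Polynomial (DualNumber F), ∀ x, G x = f.eval x) ∧
        Function.Bijective G ∧
          ∀ r : F, G (algebraMap F (DualNumber F) r) = algebraMap F (DualNumber F) r)
    (a b : F) :
    G (.inl a + .inr b) = .inl a + .inr (b * (G (.inl a + .inr 1)).snd) := by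
  obtain ⟨⟨f, hf⟩, _, hfix⟩ := hG
  have hfix' : ∀ r : F, G (.inl r) = .inl r := by
    intro r
    have := hfix r
    simpa only [TrivSqZeroExt.algebraMap_eq_inl] using this
  have h1 := key f hf hfix' a 1
  have hc : (G (.inl a + .inr 1)).snd = (f.map (π F)).derivative.eval a := by
    rw [h1]; simp
  rw [hc]
  exact key f hf hfix' a b

end CardStabAux

/-- **Theorem (order of the stabilizer of 𝔽_q).**
The pointwise stabilizer `St_α(𝔽_q)` of `𝔽_q` in the group of polynomial
permutations of `𝔽_q[α]` has exactly `(q-1)^q` elements. -/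
theorem card_stabilizer_dualNumber_finField (F : Type*) [Field F] [Fintype F]
    (q : ℕ) (hq : Fintype.card F = q) :
    Nat.card {G : DualNumber F → DualNumber F //
        (∃ f : Polynomial (DualNumber F), ∀ a, G a = f.eval a) ∧
          Function.Bijective G ∧
            ∀ r : F, G (algebraMap F (DualNumber F) r) =
              algebraMap F (DualNumber F) r} =
      (q - 1) ^ q := by
  classical
  open TrivSqZeroExt CardStabAux in
  -- the map sending a stabilizer element to the function `a ↦ snd (G (a + ε))`
  have hmain : Nat.card {G : DualNumber F → DualNumber F //
        (∃ f : Polynomial (DualNumber F), ∀ a, G a = f.eval a) ∧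
          Function.Bijective G ∧
            ∀ r : F, G (algebraMap F (DualNumber F) r) =
              algebraMap F (DualNumber F) r} =
      Nat.card (F → {x : F // x ≠ 0}) := by
    refine Nat.card_congr (Equiv.ofBijective
      (fun G a => (⟨(G.1 (.inl a + .inr 1)).snd, ?_⟩ : {x : F // x ≠ 0})) ⟨?_, ?_⟩)
    · -- nonzero
      intro h0
      have hk := key2 G.2 a 1
      rw [h0, mul_zero] at hk
      have hfix := G.2.2.2 a
      simp only [TrivSqZeroExt.algebraMap_eq_inl] at hfix
      have heq : TrivSqZeroExt.inl a + TrivSqZeroExt.inr 1 = (TrivSqZeroExt.inl a : DualNumber F) :=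
        G.2.2.1.1 (by rw [hk, hfix]; simp)
      have h1 := congrArg TrivSqZeroExt.snd heq
      simp at h1
    · -- injective
      rintro G G' h
      have hc : ∀ a : F, (G.1 (.inl a + .inr 1)).snd = (G'.1 (.inl a + .inr 1)).snd := by
        intro a
        exact congrArg Subtype.val (congrFun h a)
      apply Subtype.ext
      funext x
      rw [← TrivSqZeroExt.inl_fst_add_inr_snd_eq x, key2 G.2, key2 G'.2, hc]
    · -- surjective
      intro c
      -- construct the interpolating polynomial
      set k : F[X] := Lagrange.interpolate Finset.univ id (fun a => 1 - (c a : F)) with hk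
      have hkval : ∀ a : F, k.eval a = 1 - (c a : F) := by
        intro a
        exact Lagrange.eval_interpolate_at_node _ (Set.injOn_id _) (Finset.mem_univ a)
      set g : F[X] := X + (X ^ q - X) * k with hg
      have hcard0 : (q : F) = 0 := by
        rw [← hq]; exact FiniteField.cast_card_eq_zero F
      have hpow : ∀ a : F, a ^ q = a := by
        intro a; rw [← hq]; exact FiniteField.pow_card a
      have hgval : ∀ a : F, g.eval a = a := by
        intro a
        simp [hg, hpow a]
      have hg' : ∀ a : F, g.derivative.eval a = (c a : F) := by
        intro a
        have : g.derivative = 1 + ((C (q : F) * X ^ (q - 1) - 1) * k + (X ^ q - X) * k.derivative) := by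
          simp [hg, derivative_mul, derivative_X_pow]
        rw [this]
        simp [hcard0, hpow a, hkval a]
      set f : Polynomial (DualNumber F) := g.map (algebraMap F (DualNumber F)) with hf
      set G : DualNumber F → DualNumber F := fun x => f.eval x with hG
      have hfπ : f.map (π F) = g := by
        rw [hf, Polynomial.map_map]
        have : (π F).comp (algebraMap F (DualNumber F)) = RingHom.id F := by
          ext r
          simp [TrivSqZeroExt.algebraMap_eq_inl']
        rw [this, Polynomial.map_id]
      have hfix : ∀ r : F, G (algebraMap F (DualNumber F) r) = algebraMap F (DualNumber F) r := by
        intro r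
        show f.eval _ = _
        rw [hf, eval_map, eval₂_at_apply, hgval r]
      have hfix' : ∀ r : F, G (.inl r) = .inl r := by
        intro r
        have := hfix r
        simpa only [TrivSqZeroExt.algebraMap_eq_inl] using this
      have hform : ∀ a b : F, G (.inl a + .inr b) = .inl a + .inr (b * (c a : F)) := by
        intro a b
        have h := key (G := G) f (fun x => rfl) hfix' a b
        rw [hfπ, hg' a] at h
        exact h
      have hform' : ∀ x : DualNumber F,
          G x = .inl x.fst + .inr (x.snd * (c x.fst : F)) := by
        intro x
        conv_lhs => rw [← TrivSqZeroExt.inl_fst_add_inr_snd_eq x]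
        exact hform x.fst x.snd
      have hbij : Function.Bijective G := by
        rw [Function.bijective_iff_has_inverse]
        refine ⟨fun x => .inl x.fst + .inr (x.snd * (c x.fst : F)⁻¹), ?_, ?_⟩
        · intro x
          rw [hform' x]
          refine TrivSqZeroExt.ext ?_ ?_ <;>
            simp [mul_assoc, mul_inv_cancel₀ (c _).2]
        · intro x
          rw [hform _ _]
          refine TrivSqZeroExt.ext ?_ ?_ <;>
            simp [mul_assoc, inv_mul_cancel₀ (c _).2]
      refine ⟨⟨G, ⟨f, fun x => rfl⟩, hbij, hfix⟩, ?_⟩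
      funext a
      apply Subtype.ext
      show (G (.inl a + .inr 1)).snd = (c a : F)
      rw [hform a 1]
      simp
  rw [hmain, Nat.card_fun]
  congr 1
  · rw [← Nat.card_congr (unitsEquivNeZero (G₀ := F)), Nat.card_units,
      Nat.card_eq_fintype_card, hq]
  · rw [Nat.card_eq_fintype_card, hq]
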